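/- Let G = (V,E) be a graph and construct G̃ with vertex set V ∪ V' ∪ V'' (where V' and V'' are disjoint copies of V), edges: all edges of G on V, all edges between pairs of vertices of V' (V' induces a clique), the matching {vv' : v ∈ V}, and the matching {v'v'' : v ∈ V}. Then a subset X ⊆ V is an independent set of G if and only if X ∪ V'' is a general position set of G̃. -/
import Mathlib


open SimpleGraph

/-- `S` is a general position set of `G`: no three distinct vertices of `S`
lie on a common geodesic. -/
def IsGPSet {V : Type*} (G : SimpleGraph V) (S : Set V) : Prop :=
  ∀ x ∈ S, ∀ y ∈ S, ∀ z ∈ S, x ≠ y → y ≠ z → x ≠ z →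
    G.dist x z ≠ G.dist x y + G.dist y z

/-- The general position number of `G`. -/
noncomputable def gpNumber {V : Type*} (G : SimpleGraph V) : ℕ :=
  sSup {n | ∃ S : Set V, IsGPSet G S ∧ S.Finite ∧ S.ncard = n}

/-- The graph `G̃` of the NP-completeness reduction: vertex set `V ⊕ V' ⊕ V''`
(with `V' = Sum.inr ∘ Sum.inl` a clique copy of `V` and `V'' = Sum.inr ∘ Sum.inr`
an independent copy of `V`), keeping the edges of `G` on `V`, all edges inside
`V'`, and the matchings `v v'` and `v' v''`. -/
def tildeGraph {V : Type*} (G : SimpleGraph V) : SimpleGraph (V ⊕ (V ⊕ V)) :=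
  SimpleGraph.fromRel (fun a b =>
    match a, b with
    | Sum.inl u, Sum.inl v => G.Adj u v
    | Sum.inl u, Sum.inr (Sum.inl v) => u = v
    | Sum.inr (Sum.inl u), Sum.inr (Sum.inl v) => u ≠ v
    | Sum.inr (Sum.inl u), Sum.inr (Sum.inr v) => u = v
    | _, _ => False)

namespace TildeAux

variable {V : Type*} {G : SimpleGraph V}

lemma adj01 (u : V) : (tildeGraph G).Adj (.inl u) (.inr (.inl u)) := by
  rw [tildeGraph, SimpleGraph.fromRel_adj]
  exact ⟨by simp, Or.inl rfl⟩

lemma adj11 {u v : V} (h : u ≠ v) :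
    (tildeGraph G).Adj (.inr (.inl u)) (.inr (.inl v)) := by
  rw [tildeGraph, SimpleGraph.fromRel_adj]
  exact ⟨by simp [h], Or.inl h⟩

lemma adj12 (u : V) : (tildeGraph G).Adj (.inr (.inl u)) (.inr (.inr u)) := by
  rw [tildeGraph, SimpleGraph.fromRel_adj]
  exact ⟨by simp, Or.inl rfl⟩

lemma adj00 {u v : V} (h : G.Adj u v) : (tildeGraph G).Adj (.inl u) (.inl v) := by
  rw [tildeGraph, SimpleGraph.fromRel_adj]
  exact ⟨by simp [h.ne], Or.inl h⟩

/-- the neighbors of `v''` : only `v'`. -/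
lemma adj2_iff (u : V) (b : V ⊕ (V ⊕ V)) :
    (tildeGraph G).Adj (.inr (.inr u)) b ↔ b = .inr (.inl u) := by
  rw [tildeGraph, SimpleGraph.fromRel_adj]
  constructor
  · rintro ⟨hne, h | h⟩
    · cases h
    · rcases b with v | v | v <;> simp_all
  · rintro rfl
    exact ⟨by simp, Or.inr rfl⟩

lemma not_adj_00 {u w : V} (h : ¬ G.Adj u w) :
    ¬ (tildeGraph G).Adj (.inl u) (.inl w) := by
  rw [tildeGraph, SimpleGraph.fromRel_adj]
  rintro ⟨-, h' | h'⟩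
  · exact h h'
  · exact h h'.symm

lemma not_adj_02 (u w : V) :
    ¬ (tildeGraph G).Adj (.inl u) (.inr (.inr w)) := by
  intro h
  have := (adj2_iff w (.inl u)).mp h.symm
  simp at this

lemma not_adj_22 (u w : V) :
    ¬ (tildeGraph G).Adj (.inr (.inr u)) (.inr (.inr w)) := by
  intro h
  have := (adj2_iff u _).mp h
  simp at this

lemma not_adj_10 {u w : V} (h : u ≠ w) :
    ¬ (tildeGraph G).Adj (.inr (.inl u)) (.inl w) := by
  rw [tildeGraph, SimpleGraph.fromRel_adj]
  rintro ⟨-, h' | h'⟩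
  · cases h'
  · exact h h'.symm

/- Walks giving upper bounds. -/
lemma dist00_le {u w : V} (h : u ≠ w) :
    (tildeGraph G).dist (.inl u) (.inl w) ≤ 3 := by
  simpa using SimpleGraph.dist_le (G := tildeGraph G)
    (SimpleGraph.Walk.cons (adj01 u) (.cons (adj11 h) (.cons (adj01 w).symm .nil)))

lemma dist02_le (u w : V) :
    (tildeGraph G).dist (.inl u) (.inr (.inr w)) ≤ 3 := by
  by_cases h : u = w
  · subst h
    have := SimpleGraph.dist_le (G := tildeGraph G)
      (SimpleGraph.Walk.cons (adj01 u) (.cons (adj12 u) .nil))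
    simp only [SimpleGraph.Walk.length_cons, SimpleGraph.Walk.length_nil] at this
    omega
  · simpa using SimpleGraph.dist_le (G := tildeGraph G)
      (SimpleGraph.Walk.cons (adj01 u) (.cons (adj11 h) (.cons (adj12 w) .nil)))

lemma dist22_le {u w : V} (h : u ≠ w) :
    (tildeGraph G).dist (.inr (.inr u)) (.inr (.inr w)) ≤ 3 := by
  simpa using SimpleGraph.dist_le (G := tildeGraph G)
    (SimpleGraph.Walk.cons (adj12 u).symm (.cons (adj11 h) (.cons (adj12 w) .nil)))

lemma dist20_le (u : V) :
    (tildeGraph G).dist (.inr (.inr u)) (.inl u) ≤ 2 := by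
  simpa using SimpleGraph.dist_le (G := tildeGraph G)
    (SimpleGraph.Walk.cons (adj12 u).symm (.cons (adj01 u).symm .nil))

/-- generic lower bound 2. -/
lemma two_le_dist {a b : V ⊕ (V ⊕ V)} (hne : a ≠ b)
    (hadj : ¬ (tildeGraph G).Adj a b) (hr : (tildeGraph G).Reachable a b) :
    2 ≤ (tildeGraph G).dist a b := by
  have h0 : (tildeGraph G).dist a b ≠ 0 := by
    simp [SimpleGraph.dist_ne_zero_iff_ne_and_reachable, hne, hr]
  have h1 : (tildeGraph G).dist a b ≠ 1 := by
    intro h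
    exact hadj (SimpleGraph.dist_eq_one_iff_adj.mp h)
  omega

lemma three_le_dist20 {u w : V} (h : u ≠ w) :
    3 ≤ (tildeGraph G).dist (.inr (.inr u)) (.inl w) := by
  have hr : (tildeGraph G).Reachable (.inr (.inr u)) (.inl w) := by
    by_cases huw : u = w
    · subst huw; exact ((adj12 u).symm.toWalk.append (adj01 u).symm.toWalk).reachable
    · exact ((adj12 u).symm.toWalk.append
        ((adj11 huw).toWalk.append (adj01 w).symm.toWalk)).reachable
  have hne : (Sum.inr (Sum.inr u) : V ⊕ (V ⊕ V)) ≠ .inl w := by simp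
  obtain ⟨p, hp⟩ := hr.exists_walk_length_eq_dist
  rw [← hp]
  cases p with
  | cons hadj q =>
    rename_i b
    have hb : b = .inr (.inl u) := (adj2_iff u b).mp hadj
    subst hb
    have h2 : 2 ≤ q.length := by
      cases q with
      | cons hadj2 q2 =>
        cases q2 with
        | nil => exact absurd hadj2 (not_adj_10 h)
        | cons h3 q3 => simp
    simp only [SimpleGraph.Walk.length_cons]
    omega

lemma dist20_eq (u : V) :
    (tildeGraph G).dist (.inr (.inr u)) (.inl u) = 2 := by
  have h1 := dist20_le (G := G) u
  have h2 : 2 ≤ (tildeGraph G).dist (.inr (.inr u)) (.inl u) := by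
    refine two_le_dist (by simp) ?_ ?_
    · intro hadj
      have := (adj2_iff u _).mp hadj
      simp at this
    · exact ((adj12 u).symm.toWalk.append (adj01 u).symm.toWalk).reachable
  omega

lemma dist20_eq' {u w : V} (h : u ≠ w) :
    (tildeGraph G).dist (.inr (.inr u)) (.inl w) = 3 := by
  have h1 := three_le_dist20 (G := G) h
  have h2 : (tildeGraph G).dist (.inl w) (.inr (.inr u)) ≤ 3 := dist02_le w u
  rw [SimpleGraph.dist_comm] at h2
  omega

end TildeAux

theorem indep_iff_gp_tilde {V : Type*} [Nonempty V] (G : SimpleGraph V) (X : Set V) :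
    X.Pairwise (fun u v => ¬ G.Adj u v) ↔
      IsGPSet (tildeGraph G)
        ((Sum.inl '' X) ∪ (Set.range (Sum.inr ∘ Sum.inr))) := by
  open TildeAux in
  constructor
  · intro hX
    -- key : any two distinct members of S are at distance in [2,3]
    have key : ∀ a ∈ (Sum.inl '' X) ∪ (Set.range (Sum.inr ∘ Sum.inr)),
        ∀ b ∈ (Sum.inl '' X) ∪ (Set.range (Sum.inr ∘ Sum.inr)), a ≠ b →
        2 ≤ (tildeGraph G).dist a b ∧ (tildeGraph G).dist a b ≤ 3 := by
      rintro a (⟨u, hu, rfl⟩ | ⟨u, rfl⟩) b (⟨w, hw, rfl⟩ | ⟨w, rfl⟩) hne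
      · -- both inl
        have huw : u ≠ w := fun h => hne (by rw [h])
        have hnadj : ¬ G.Adj u w := hX hu hw huw
        refine ⟨two_le_dist hne (not_adj_00 hnadj) ?_, dist00_le huw⟩
        exact ((adj01 u).toWalk.append
          ((adj11 huw).toWalk.append (adj01 w).symm.toWalk)).reachable
      · -- inl, inr inr
        refine ⟨two_le_dist hne (not_adj_02 u w) ?_, dist02_le u w⟩
        by_cases h : u = w
        · subst h; exact ((adj01 u).toWalk.append (adj12 u).toWalk).reachable
        · exact ((adj01 u).toWalk.append
            ((adj11 h).toWalk.append (adj12 w).toWalk)).reachable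
      · -- inr inr, inl
        rw [SimpleGraph.dist_comm]
        have hne' : (Sum.inl w : V ⊕ (V ⊕ V)) ≠ .inr (.inr u) := fun h => hne h.symm
        refine ⟨two_le_dist hne' (not_adj_02 w u) ?_, dist02_le w u⟩
        by_cases h : w = u
        · subst h; exact ((adj01 w).toWalk.append (adj12 w).toWalk).reachable
        · exact ((adj01 w).toWalk.append
            ((adj11 h).toWalk.append (adj12 u).toWalk)).reachable
      · -- both inr inr
        have huw : u ≠ w := by
          intro h; exact hne (by simp [h])
        refine ⟨two_le_dist hne (not_adj_22 u w) ?_, dist22_le huw⟩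
        exact ((adj12 u).symm.toWalk.append
          ((adj11 huw).toWalk.append (adj12 w).toWalk)).reachable
    intro x hx y hy z hz hxy hyz hxz
    have h1 := key x hx y hy hxy
    have h2 := key y hy z hz hyz
    have h3 := key x hx z hz hxz
    omega
  · intro hS
    intro u hu w hw huw hadj
    have hx : (Sum.inr (Sum.inr u) : V ⊕ (V ⊕ V)) ∈
        (Sum.inl '' X) ∪ (Set.range (Sum.inr ∘ Sum.inr)) := Or.inr ⟨u, rfl⟩
    have hy : (Sum.inl u : V ⊕ (V ⊕ V)) ∈
        (Sum.inl '' X) ∪ (Set.range (Sum.inr ∘ Sum.inr)) := Or.inl ⟨u, hu, rfl⟩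
    have hz : (Sum.inl w : V ⊕ (V ⊕ V)) ∈
        (Sum.inl '' X) ∪ (Set.range (Sum.inr ∘ Sum.inr)) := Or.inl ⟨w, hw, rfl⟩
    have hd1 : (tildeGraph G).dist (.inr (.inr u)) (.inl u) = 2 := dist20_eq u
    have hd2 : (tildeGraph G).dist (.inl u) (.inl w) = 1 :=
      SimpleGraph.dist_eq_one_iff_adj.mpr (adj00 hadj)
    have hd3 : (tildeGraph G).dist (.inr (.inr u)) (.inl w) = 3 := dist20_eq' huw
    exact hS _ hx _ hy _ hz (by simp) (by simp [huw]) (by simp)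
      (by rw [hd1, hd2, hd3])
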